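/- Let J ⊂ ℤ be a finite set with no two elements adjacent (|j − j'| ≥ 2 for distinct j, j' ∈ J), and let K ⊆ J. Then the following identity holds in ℤ[q]: Σ_{P} Σ_{R} Σ_{A} q^{comaj(P) + comaj(R) + inv(A)} = Σ_{W} q^{comaj(W)}, where P ranges over all enumerations of J∖K, R over all enumerations of K, A over all shuffle patterns for lengths (|J∖K|, |K|), and W over all enumerations of J. That is, the statistic comaj(P)+comaj(R)+inv(A) on shuffles of enumerations of J∖K and K is equidistributed with comaj on enumerations of J. -/

import Mathlib

/-- `comaj` of a word: the sum of the (1-indexed) positions `j` with `q_j < q_{j+1}`. -/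
def comajZ (Q : List ℤ) : ℕ :=
  ∑ j ∈ Finset.range (Q.length - 1), if Q.getD j 0 < Q.getD (j + 1) 0 then j + 1 else 0

/-- The number of inversions of a shuffle pattern `A ⊆ {1, …, n}`:
`#{(j,k) : j ∈ A, k ∈ {1,…,n} \ A, k < j}`. -/
def invStat (n : ℕ) (A : Finset ℕ) : ℕ :=
  ((A ×ˢ (Finset.Icc 1 n \ A)).filter fun p => p.2 < p.1).card

open Polynomial Finset List

noncomputable def qnum (k : ℕ) : Polynomial ℤ := ∑ i ∈ Finset.range k, Polynomial.X ^ i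

noncomputable def qfact : ℕ → Polynomial ℤ
  | 0 => 1
  | n+1 => qfact n * qnum (n+1)

lemma qnum_succ (k : ℕ) : qnum (k+1) = Polynomial.X * qnum k + 1 := by
  simpa [qnum] using geom_sum_succ (x := (Polynomial.X : Polynomial ℤ)) (n := k)

lemma qnum_succ' (k : ℕ) : qnum (k+1) = qnum k + Polynomial.X ^ k := by
  simp [qnum, Finset.sum_range_succ]

lemma qnum_add (p r : ℕ) : qnum (p + r) = qnum r + Polynomial.X ^ r * qnum p := by
  induction p with
  | zero => simp [qnum]
  | succ p ih =>
      have h : p + 1 + r = (p + r) + 1 := by omega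
      rw [h, qnum_succ', ih, qnum_succ']
      ring

lemma comajZ_nil : comajZ [] = 0 := by simp [comajZ]

lemma comajZ_singleton (a : ℤ) : comajZ [a] = 0 := by simp [comajZ]

lemma comajZ_concat (u : List ℤ) (x : ℤ) (hu : u ≠ []) :
    comajZ (u ++ [x]) = comajZ u +
      if u.getD (u.length - 1) 0 < x then u.length else 0 := by
  have hlen : u.length ≠ 0 := by simpa using hu
  obtain ⟨L, hL⟩ : ∃ L, u.length = L + 1 := ⟨u.length - 1, by omega⟩
  unfold comajZ
  rw [List.length_append, List.length_singleton, hL]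
  simp only [hL, Nat.add_sub_cancel]
  rw [Finset.sum_range_succ]
  have h2 : ∀ j ∈ Finset.range L,
      (if (u ++ [x]).getD j 0 < (u ++ [x]).getD (j+1) 0 then j + 1 else 0)
        = (if u.getD j 0 < u.getD (j+1) 0 then j + 1 else 0) := by
    intro j hj
    rw [Finset.mem_range] at hj
    rw [List.getD_append _ _ _ _ (by omega), List.getD_append _ _ _ _ (by omega)]
  rw [Finset.sum_congr rfl h2]
  congr 1
  rw [List.getD_append _ _ _ _ (by omega),
    List.getD_append_right _ _ _ _ (by omega)]
  have h3 : L + 1 - u.length = 0 := by omega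
  rw [h3]
  simp

lemma insertIdx_append_sing (m x : ℤ) : ∀ (l : List ℤ) (i : ℕ), i ≤ l.length →
    List.insertIdx (l ++ [x]) i m = List.insertIdx l i m ++ [x]
  | _, 0, _ => by simp
  | b :: t, i+1, h => by
      rw [List.cons_append, List.insertIdx_succ_cons, List.insertIdx_succ_cons,
        insertIdx_append_sing m x t i (by simpa using h), List.cons_append]
  | [], i+1, h => by simp at h

lemma getD_insertIdx_last (m : ℤ) : ∀ (l : List ℤ) (i : ℕ), i < l.length →
    (List.insertIdx l i m).getD l.length 0 = l.getD (l.length - 1) 0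
  | b :: t, 0, _ => by simp
  | b :: t, i+1, h => by
      have ht : i < t.length := by simpa using h
      have ht1 : 1 ≤ t.length := by omega
      rw [List.insertIdx_succ_cons]
      have e1 : (b :: t).length = t.length + 1 := rfl
      rw [e1, List.getD_cons_succ, getD_insertIdx_last m t i ht]
      have e2 : t.length + 1 - 1 = (t.length - 1) + 1 := by omega
      rw [e2, List.getD_cons_succ]
  | [], i, h => by simp at h

lemma sum_insert_min (m : ℤ) (l : List ℤ) (hm : ∀ y ∈ l, m < y) :
    ∑ i ∈ Finset.range (l.length + 1),
        (Polynomial.X : Polynomial ℤ) ^ comajZ (List.insertIdx l i m)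
      = Polynomial.X ^ comajZ l * qnum (l.length + 1) := by
  induction l using List.reverseRecOn with
  | nil =>
      simp [comajZ_nil, comajZ_singleton, qnum, Finset.sum_range_succ]
  | append_singleton l x ih =>
      have hmx : m < x := hm x (by simp)
      have hml : ∀ y ∈ l, m < y := fun y hy => hm y (by simp [hy])
      rcases eq_or_ne l [] with rfl | hne
      · -- l = []
        have h1 : List.insertIdx [x] 0 m = [m, x] := by simp
        have h2 : List.insertIdx [x] 1 m = [x, m] := by
          have := List.insertIdx_length_self (l := [x]) (x := m)
          simpa using this
        rw [show ([] : List ℤ) ++ [x] = [x] from rfl]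
        rw [show ([x] : List ℤ).length + 1 = 2 from rfl]
        rw [Finset.sum_range_succ, Finset.sum_range_one, h1, h2]
        have c1 : comajZ [m, x] = 1 := by
          have := comajZ_concat [m] x (by simp)
          simpa [comajZ_singleton, hmx] using this
        have c2 : comajZ [x, m] = 0 := by
          have := comajZ_concat [x] m (by simp)
          simpa [comajZ_singleton, not_lt.2 hmx.le] using this
        rw [c1, c2, comajZ_singleton]
        simp [qnum, Finset.sum_range_succ]
        ring
      · have ihl := ih hml
        set L := l.length with hLdef
        have hL1 : 1 ≤ L := List.length_pos_iff.mpr hne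
        have hlen : (l ++ [x]).length = L + 1 := by simp [hLdef]
        have hinsL : List.insertIdx l L m = l ++ [m] :=
          List.insertIdx_length_self (l := l) (x := m)
        have hlastmem : l.getD (L - 1) 0 ∈ l := by
          rw [List.getD_eq_getElem l 0 (by omega)]
          exact List.getElem_mem _
        have hcomajLm : comajZ (l ++ [m]) = comajZ l := by
          rw [comajZ_concat l m hne, if_neg (not_lt.2 (hml _ hlastmem).le), add_zero]
        -- last inserted-at-end term (i = L+1)
        have hlast_term : comajZ (List.insertIdx (l ++ [x]) (L+1) m) = comajZ (l ++ [x]) := by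
          have h1 : List.insertIdx (l ++ [x]) (L+1) m = (l ++ [x]) ++ [m] := by
            have := List.insertIdx_length_self (l := l ++ [x]) (x := m)
            rwa [hlen] at this
          rw [h1, comajZ_concat (l ++ [x]) m (by simp), hlen]
          have h2 : (l ++ [x]).getD (L + 1 - 1) 0 = x := by
            rw [Nat.add_sub_cancel, List.getD_append_right _ _ _ _ (le_refl _)]
            simp [hLdef]
          rw [h2, if_neg (not_lt.2 hmx.le), add_zero]
        rw [hlen, Finset.sum_range_succ, hlast_term]
        by_cases hlast : l.getD (L - 1) 0 < x
        · -- final-ascent case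
          have hstep : ∀ i ∈ Finset.range (L + 1),
              (Polynomial.X : Polynomial ℤ) ^ comajZ (List.insertIdx (l ++ [x]) i m)
                = Polynomial.X ^ comajZ (List.insertIdx l i m) * Polynomial.X ^ (L + 1) := by
            intro i hi
            rw [Finset.mem_range] at hi
            rw [insertIdx_append_sing m x l i (by omega)]
            have hne2 : List.insertIdx l i m ≠ [] := by
              intro h
              have := congrArg List.length h
              rw [List.length_insertIdx_of_le_length (by omega) m] at this
              simp at this
            rw [comajZ_concat _ x hne2, List.length_insertIdx_of_le_length (by omega) m]
            have hgd : (List.insertIdx l i m).getD (L + 1 - 1) 0 < x := by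
              rw [Nat.add_sub_cancel]
              rcases Nat.lt_or_ge i L with hiL | hiL
              · rw [getD_insertIdx_last m l i hiL]; exact hlast
              · have hiL' : i = L := by omega
                rw [hiL', hinsL, List.getD_append_right _ _ _ _ (le_refl _)]
                simpa [hLdef] using hmx
            rw [if_pos hgd, pow_add]
          rw [Finset.sum_congr rfl hstep, ← Finset.sum_mul, ihl,
            comajZ_concat l x hne, if_pos hlast, qnum_succ (L + 1), pow_add]
          ring
        · -- no final ascent
          have hcomajlx : comajZ (l ++ [x]) = comajZ l := by
            rw [comajZ_concat l x hne, if_neg hlast, add_zero]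
          rw [Finset.sum_range_succ]
          have hstep : ∀ i ∈ Finset.range L,
              (Polynomial.X : Polynomial ℤ) ^ comajZ (List.insertIdx (l ++ [x]) i m)
                = Polynomial.X ^ comajZ (List.insertIdx l i m) := by
            intro i hi
            rw [Finset.mem_range] at hi
            rw [insertIdx_append_sing m x l i (by omega)]
            have hne2 : List.insertIdx l i m ≠ [] := by
              intro h
              have := congrArg List.length h
              rw [List.length_insertIdx_of_le_length (by omega) m] at this
              simp at this
            rw [comajZ_concat _ x hne2, List.length_insertIdx_of_le_length (by omega) m,
              Nat.add_sub_cancel, getD_insertIdx_last m l i hi, if_neg hlast, add_zero]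
          rw [Finset.sum_congr rfl hstep]
          -- the i = L term
          have hterm_L : comajZ (List.insertIdx (l ++ [x]) L m) = comajZ l + (L + 1) := by
            rw [insertIdx_append_sing m x l L (le_refl _), hinsL,
              comajZ_concat (l ++ [m]) x (by simp)]
            have h2 : (l ++ [m]).getD ((l ++ [m]).length - 1) 0 = m := by
              simp only [List.length_append, List.length_singleton, Nat.add_sub_cancel]
              rw [List.getD_append_right _ _ _ _ (le_refl _)]
              simp [hLdef]
            rw [h2, if_pos hmx, hcomajLm]
            simp [hLdef]
          have hsumL : ∑ i ∈ Finset.range L,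
              (Polynomial.X : Polynomial ℤ) ^ comajZ (List.insertIdx l i m)
                = Polynomial.X ^ comajZ l * qnum (L + 1) - Polynomial.X ^ comajZ l := by
            have := ihl
            rw [Finset.sum_range_succ, hinsL, hcomajLm] at this
            linear_combination this
          rw [hsumL, hterm_L, hcomajlx, qnum_succ' (L + 1), pow_add]
          ring
lemma insertIdx_indexOf_erase (m : ℤ) : ∀ (l : List ℤ), m ∈ l →
    List.insertIdx (l.erase m) (l.idxOf m) m = l
  | b :: t, h => by
      by_cases hb : b = m
      · subst hb
        rw [List.idxOf_cons_self, List.erase_cons_head, List.insertIdx_zero]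
      · have hbm : ¬(b == m) := by simpa using hb
        have hmt : m ∈ t := by
          rcases List.mem_cons.mp h with h' | h'
          · exact absurd h'.symm hb
          · exact h'
        rw [List.idxOf_cons_ne _ hb, List.erase_cons_tail hbm]
        rw [Nat.succ_eq_add_one, List.insertIdx_succ_cons,
          insertIdx_indexOf_erase m t hmt]

lemma erase_insertIdx (m : ℤ) : ∀ (l : List ℤ) (i : ℕ), i ≤ l.length → m ∉ l →
    (List.insertIdx l i m).erase m = l
  | l, 0, _, _ => by rw [List.insertIdx_zero, List.erase_cons_head]
  | b :: t, i+1, h, hm => by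
      have hbm : ¬(b == m) := by
        simp only [beq_iff_eq]
        intro hh; exact hm (hh ▸ List.mem_cons_self)
      rw [List.insertIdx_succ_cons, List.erase_cons_tail hbm,
        erase_insertIdx m t i (by simpa using h) (fun hh => hm (List.mem_cons_of_mem _ hh))]
  | [], i+1, h, _ => by simp at h

lemma indexOf_insertIdx (m : ℤ) : ∀ (l : List ℤ) (i : ℕ), i ≤ l.length → m ∉ l →
    (List.insertIdx l i m).idxOf m = i
  | l, 0, _, _ => by rw [List.insertIdx_zero, List.idxOf_cons_self]
  | b :: t, i+1, h, hm => by
      have hb : b ≠ m := fun hh => hm (hh ▸ List.mem_cons_self)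
      rw [List.insertIdx_succ_cons, List.idxOf_cons_ne _ hb,
        indexOf_insertIdx m t i (by simpa using h) (fun hh => hm (List.mem_cons_of_mem _ hh))]
  | [], i+1, h, _ => by simp at h

lemma sum_perms_cons (m : ℤ) (L : List ℤ) (hm : m ∉ L)
    (f : List ℤ → Polynomial ℤ) :
    ∑ l ∈ (m :: L).permutations.toFinset, f l
      = ∑ p ∈ L.permutations.toFinset ×ˢ Finset.range (L.length + 1),
          f (List.insertIdx p.1 p.2 m) := by
  refine Finset.sum_nbij' (fun l => (l.erase m, l.idxOf m))
    (fun p => List.insertIdx p.1 p.2 m) ?_ ?_ ?_ ?_ ?_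
  · intro l hl
    rw [List.mem_toFinset, List.mem_permutations] at hl
    have hml : m ∈ l := hl.mem_iff.mpr (List.mem_cons_self)
    rw [Finset.mem_product, List.mem_toFinset, List.mem_permutations, Finset.mem_range]
    constructor
    · have := hl.erase m
      rwa [List.erase_cons_head] at this
    · have := List.idxOf_lt_length_iff.mpr hml
      rw [hl.length_eq] at this
      simpa using this
  · intro p hp
    rw [Finset.mem_product, List.mem_toFinset, List.mem_permutations, Finset.mem_range] at hp
    rw [List.mem_toFinset, List.mem_permutations]
    have hlen : p.2 ≤ p.1.length := by
      rw [hp.1.length_eq]; omega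
    exact (List.perm_insertIdx m p.1 hlen).trans (hp.1.cons m)
  · intro l hl
    rw [List.mem_toFinset, List.mem_permutations] at hl
    have hml : m ∈ l := hl.mem_iff.mpr (List.mem_cons_self)
    exact insertIdx_indexOf_erase m l hml
  · intro p hp
    rw [Finset.mem_product, List.mem_toFinset, List.mem_permutations, Finset.mem_range] at hp
    have hmp : m ∉ p.1 := fun hh => hm (hp.1.mem_iff.mp hh)
    have hlen : p.2 ≤ p.1.length := by rw [hp.1.length_eq]; omega
    have h1 := erase_insertIdx m p.1 p.2 hlen hmp
    have h2 := indexOf_insertIdx m p.1 p.2 hlen hmp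
    exact Prod.ext h1 h2
  · intro l hl
    rw [List.mem_toFinset, List.mem_permutations] at hl
    have hml : m ∈ l := hl.mem_iff.mpr (List.mem_cons_self)
    rw [insertIdx_indexOf_erase m l hml]

lemma lemA : ∀ (n : ℕ) (S : Finset ℤ), S.card = n →
    (∑ l ∈ S.toList.permutations.toFinset,
      (Polynomial.X : Polynomial ℤ) ^ comajZ l) = qfact n := by
  intro n
  induction n with
  | zero =>
      intro S hS
      rw [Finset.card_eq_zero] at hS
      subst hS
      simp [comajZ_nil, qfact]
  | succ n ih =>
      intro S hS
      have hne : S.Nonempty := by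
        rw [← Finset.card_pos, hS]; omega
      set m := S.min' hne with hmdef
      set S' := S.erase m with hS'def
      have hmS : m ∈ S := S.min'_mem hne
      have hcard' : S'.card = n := by
        rw [hS'def, Finset.card_erase_of_mem hmS, hS]
        omega
      have hmnot : m ∉ S'.toList := by
        rw [Finset.mem_toList]; exact Finset.notMem_erase m S
      have hperm : S.toList.Perm (m :: S'.toList) := by
        apply List.perm_of_nodup_nodup_toFinset_eq S.nodup_toList
        · exact List.nodup_cons.mpr ⟨hmnot, S'.nodup_toList⟩
        · rw [Finset.toList_toFinset, List.toFinset_cons, Finset.toList_toFinset]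
          rw [hS'def, Finset.insert_erase hmS]
      have hsets : S.toList.permutations.toFinset
          = (m :: S'.toList).permutations.toFinset := by
        ext l
        simp only [List.mem_toFinset, List.mem_permutations]
        exact ⟨fun h => h.trans hperm, fun h => h.trans hperm.symm⟩
      rw [hsets, sum_perms_cons m S'.toList hmnot, Finset.sum_product]
      have hlen : S'.toList.length = n := by
        rw [Finset.length_toList, hcard']
      have hmin : ∀ y ∈ S'.toList, m < y := by
        intro y hy
        rw [Finset.mem_toList] at hy
        exact Finset.min'_lt_of_mem_erase_min' S hne hy
      have hinner : ∀ l' ∈ S'.toList.permutations.toFinset,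
          ∑ i ∈ Finset.range (S'.toList.length + 1),
            (Polynomial.X : Polynomial ℤ) ^ comajZ (List.insertIdx l' i m)
          = Polynomial.X ^ comajZ l' * qnum (n + 1) := by
        intro l' hl'
        rw [List.mem_toFinset, List.mem_permutations] at hl'
        have hml' : ∀ y ∈ l', m < y := fun y hy => hmin y (hl'.mem_iff.mp hy)
        have hlen' : l'.length = S'.toList.length := hl'.length_eq
        rw [show S'.toList.length = l'.length from hlen'.symm,
          sum_insert_min m l' hml', hlen', hlen]
      rw [Finset.sum_congr rfl hinner, ← Finset.sum_mul, ih S' hcard']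
      rfl
lemma invStat_empty (n : ℕ) : invStat n ∅ = 0 := by simp [invStat]

lemma invStat_full (n : ℕ) : invStat n (Finset.Icc 1 n) = 0 := by simp [invStat]

lemma invStat_of_subset (n : ℕ) (A : Finset ℕ) (hA : A ⊆ Finset.Icc 1 n) :
    invStat (n + 1) A = invStat n A := by
  unfold invStat
  congr 1
  ext ⟨j, k⟩
  simp only [Finset.mem_filter, Finset.mem_product, Finset.mem_sdiff, Finset.mem_Icc]
  constructor
  · rintro ⟨⟨hj, ⟨⟨hk1, hk2⟩, hk3⟩⟩, hlt⟩
    have hj' := hA hj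
    rw [Finset.mem_Icc] at hj'
    exact ⟨⟨hj, ⟨⟨hk1, by omega⟩, hk3⟩⟩, hlt⟩
  · rintro ⟨⟨hj, ⟨⟨hk1, hk2⟩, hk3⟩⟩, hlt⟩
    exact ⟨⟨hj, ⟨⟨hk1, by omega⟩, hk3⟩⟩, hlt⟩

lemma invStat_insert (n : ℕ) (B : Finset ℕ) (hB : B ⊆ Finset.Icc 1 n) :
    invStat (n + 1) (insert (n + 1) B) = invStat n B + (n - B.card) := by
  have hnB : (n + 1) ∉ B := fun h => by
    have := hB h; rw [Finset.mem_Icc] at this; omega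
  have hC : Finset.Icc 1 (n + 1) \ insert (n + 1) B = Finset.Icc 1 n \ B := by
    ext k
    simp only [Finset.mem_sdiff, Finset.mem_Icc, Finset.mem_insert]
    constructor
    · rintro ⟨⟨h1, h2⟩, h3⟩
      push_neg at h3
      exact ⟨⟨h1, by omega⟩, h3.2⟩
    · rintro ⟨⟨h1, h2⟩, h3⟩
      refine ⟨⟨h1, by omega⟩, ?_⟩
      push_neg
      exact ⟨by omega, h3⟩
  unfold invStat
  rw [hC]
  have hsplit : ((insert (n + 1) B ×ˢ (Finset.Icc 1 n \ B)).filter fun p => p.2 < p.1)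
      = ((B ×ˢ (Finset.Icc 1 n \ B)).filter fun p => p.2 < p.1)
        ∪ ({n + 1} ×ˢ (Finset.Icc 1 n \ B)) := by
    ext ⟨j, k⟩
    simp only [Finset.mem_filter, Finset.mem_product, Finset.mem_union, Finset.mem_insert,
      Finset.mem_sdiff, Finset.mem_Icc, Finset.mem_singleton]
    constructor
    · rintro ⟨⟨hj, hk⟩, hlt⟩
      rcases hj with hj | hj
      · exact Or.inr ⟨hj, hk⟩
      · exact Or.inl ⟨⟨hj, hk⟩, hlt⟩
    · rintro (⟨⟨hj, hk⟩, hlt⟩ | ⟨hj, hk⟩)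
      · exact ⟨⟨Or.inr hj, hk⟩, hlt⟩
      · exact ⟨⟨Or.inl hj, hk⟩, by omega⟩
  rw [hsplit, Finset.card_union_of_disjoint, Finset.card_product, Finset.card_singleton,
    one_mul, Finset.card_sdiff_of_subset hB, Nat.card_Icc]
  · norm_num
  · rw [Finset.disjoint_left]
    rintro ⟨j, k⟩ hjk hjk'
    simp only [Finset.mem_filter, Finset.mem_product] at hjk
    simp only [Finset.mem_product, Finset.mem_singleton] at hjk'
    exact hnB (hjk'.1 ▸ hjk.1.1)

lemma lemG : ∀ (n p r : ℕ), p + r = n →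
    qfact p * qfact r *
      (∑ A ∈ (Finset.Icc 1 n).powerset.filter (fun A => A.card = p),
        (Polynomial.X : Polynomial ℤ) ^ invStat n A) = qfact n := by
  intro n
  induction n with
  | zero =>
      intro p r h
      have hp : p = 0 := by omega
      subst hp
      have hr : r = 0 := by omega
      subst hr
      have : (Finset.Icc 1 0).powerset = {∅} := by decide
      rw [this, Finset.filter_singleton]
      simp [invStat, qfact]
  | succ n ihn =>
      intro p r hpr
      rcases Nat.eq_zero_or_pos p with hp0 | hp
      · subst hp0
        have hfilter : (Finset.Icc 1 (n+1)).powerset.filter (fun A => A.card = 0)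
            = {∅} := by
          ext A
          simp only [Finset.mem_filter, Finset.mem_powerset, Finset.mem_singleton,
            Finset.card_eq_zero]
          exact ⟨fun h => h.2, fun h => ⟨h ▸ Finset.empty_subset _, h⟩⟩
        rw [hfilter, Finset.sum_singleton, invStat_empty, pow_zero]
        have : r = n + 1 := by omega
        subst this
        simp [qfact]
      rcases Nat.eq_zero_or_pos r with hr0 | hr
      · subst hr0
        have hpn : p = n + 1 := by omega
        subst hpn
        have hfilter : (Finset.Icc 1 (n+1)).powerset.filter (fun A => A.card = n + 1)
            = {Finset.Icc 1 (n+1)} := by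
          ext A
          simp only [Finset.mem_filter, Finset.mem_powerset, Finset.mem_singleton]
          constructor
          · rintro ⟨hsub, hcard⟩
            apply Finset.eq_of_subset_of_card_le hsub
            rw [hcard, Nat.card_Icc]
            omega
          · rintro rfl
            exact ⟨Finset.Subset.refl _, by rw [Nat.card_Icc]; omega⟩
        rw [hfilter, Finset.sum_singleton, invStat_full, pow_zero]
        simp [qfact]
      -- main case
      obtain ⟨p', rfl⟩ : ∃ p', p = p' + 1 := ⟨p - 1, by omega⟩
      obtain ⟨r', rfl⟩ : ∃ r', r = r' + 1 := ⟨r - 1, by omega⟩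
      set T := (Finset.Icc 1 (n+1)).powerset.filter (fun A => A.card = p' + 1) with hT
      rw [← Finset.sum_filter_add_sum_filter_not T (fun A => (n+1) ∈ A)]
      have hS1 : ∑ A ∈ T.filter (fun A => (n+1) ∈ A),
          (Polynomial.X : Polynomial ℤ) ^ invStat (n+1) A
          = ∑ B ∈ (Finset.Icc 1 n).powerset.filter (fun A => A.card = p'),
              (Polynomial.X : Polynomial ℤ) ^ invStat n B * Polynomial.X ^ (r' + 1) := by
        refine Finset.sum_nbij' (fun A => A.erase (n+1)) (fun B => insert (n+1) B)
          ?_ ?_ ?_ ?_ ?_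
        · intro A hA
          simp only [hT, Finset.mem_filter, Finset.mem_powerset] at hA ⊢
          obtain ⟨⟨hsub, hcard⟩, hmem⟩ := hA
          constructor
          · intro a ha
            rw [Finset.mem_erase] at ha
            have := hsub ha.2
            rw [Finset.mem_Icc] at this ⊢
            have := ha.1
            omega
          · rw [Finset.card_erase_of_mem hmem, hcard]
            omega
        · intro B hB
          simp only [hT, Finset.mem_filter, Finset.mem_powerset] at hB ⊢
          obtain ⟨hsub, hcard⟩ := hB
          have hnotin : (n+1) ∉ B := fun h => by
            have := hsub h; rw [Finset.mem_Icc] at this; omega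
          refine ⟨⟨?_, ?_⟩, Finset.mem_insert_self _ _⟩
          · intro a ha
            rcases Finset.mem_insert.mp ha with rfl | ha'
            · rw [Finset.mem_Icc]; omega
            · have := hsub ha'; rw [Finset.mem_Icc] at this ⊢; omega
          · rw [Finset.card_insert_of_notMem hnotin, hcard]
        · intro A hA
          simp only [hT, Finset.mem_filter, Finset.mem_powerset] at hA
          exact Finset.insert_erase hA.2
        · intro B hB
          simp only [Finset.mem_filter, Finset.mem_powerset] at hB
          apply Finset.erase_insert
          intro h
          have := hB.1 h
          rw [Finset.mem_Icc] at this
          omega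
        · intro A hA
          simp only [hT, Finset.mem_filter, Finset.mem_powerset] at hA
          obtain ⟨⟨hsub, hcard⟩, hmem⟩ := hA
          have hBsub : A.erase (n+1) ⊆ Finset.Icc 1 n := by
            intro a ha
            rw [Finset.mem_erase] at ha
            have := hsub ha.2
            rw [Finset.mem_Icc] at this ⊢
            have := ha.1
            omega
          have := invStat_insert n (A.erase (n+1)) hBsub
          rw [Finset.insert_erase hmem] at this
          rw [this, pow_add, Finset.card_erase_of_mem hmem, hcard]
          congr 2
          omega
      have hS2 : ∑ A ∈ T.filter (fun A => ¬ (n+1) ∈ A),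
          (Polynomial.X : Polynomial ℤ) ^ invStat (n+1) A
          = ∑ A ∈ (Finset.Icc 1 n).powerset.filter (fun A => A.card = p' + 1),
              (Polynomial.X : Polynomial ℤ) ^ invStat n A := by
        have hset : T.filter (fun A => ¬ (n+1) ∈ A)
            = (Finset.Icc 1 n).powerset.filter (fun A => A.card = p' + 1) := by
          ext A
          simp only [hT, Finset.mem_filter, Finset.mem_powerset]
          constructor
          · rintro ⟨⟨hsub, hcard⟩, hmem⟩
            refine ⟨?_, hcard⟩
            intro a ha
            have := hsub ha
            rw [Finset.mem_Icc] at this ⊢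
            have : a ≠ n + 1 := fun h => hmem (h ▸ ha)
            omega
          · rintro ⟨hsub, hcard⟩
            have hnotin : (n+1) ∉ A := fun h => by
              have := hsub h; rw [Finset.mem_Icc] at this; omega
            refine ⟨⟨?_, hcard⟩, hnotin⟩
            intro a ha
            have := hsub ha; rw [Finset.mem_Icc] at this ⊢; omega
        rw [hset]
        apply Finset.sum_congr rfl
        intro A hA
        simp only [Finset.mem_filter, Finset.mem_powerset] at hA
        rw [invStat_of_subset n A hA.1]
      rw [hS1, hS2, ← Finset.sum_mul]
      have ih1 := ihn p' (r' + 1) (by omega)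
      have ih2 := ihn (p' + 1) r' (by omega)
      have key : qnum (n + 1) = qnum (r' + 1) + Polynomial.X ^ (r' + 1) * qnum (p' + 1) := by
        have : (p' + 1) + (r' + 1) = n + 1 := by omega
        rw [← this, qnum_add]
      have e1 : qfact (p' + 1) = qfact p' * qnum (p' + 1) := rfl
      have e2 : qfact (r' + 1) = qfact r' * qnum (r' + 1) := rfl
      have e3 : qfact (n + 1) = qfact n * qnum (n + 1) := rfl
      rw [e1, e2, e3, key]
      rw [e2] at ih1
      rw [e1] at ih2
      linear_combination (qnum (p' + 1) * Polynomial.X ^ (r' + 1)) * ih1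
        + qnum (r' + 1) * ih2

lemma setOf_eq_perms (S : Finset ℤ) :
    {l : List ℤ | l.Nodup ∧ l.toFinset = S} = ↑(S.toList.permutations.toFinset) := by
  ext l
  simp only [Set.mem_setOf_eq, Finset.coe_sort_coe, Finset.mem_coe,
    List.mem_toFinset, List.mem_permutations]
  constructor
  · rintro ⟨hnd, hfs⟩
    exact List.perm_of_nodup_nodup_toFinset_eq hnd S.nodup_toList
      (by rw [hfs, Finset.toList_toFinset])
  · intro h
    refine ⟨h.nodup_iff.mpr S.nodup_toList, ?_⟩
    rw [List.toFinset_eq_of_perm _ _ h, Finset.toList_toFinset]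

/-- Let `J ⊂ ℤ` be a finite set with no two elements adjacent, and `K ⊆ J`.  Then, over
all enumerations `P` of `J \ K`, `R` of `K`, and shuffle patterns `A`, the statistic
`comaj(P) + comaj(R) + inv(A)` is equidistributed with `comaj` on enumerations of `J`:
`Σ_{P,R,A} q^{comaj(P)+comaj(R)+inv(A)} = Σ_W q^{comaj(W)}` in `ℤ[q]`. -/
theorem comaj_shuffle_equidistribution
    (J K : Finset ℤ) (hK : K ⊆ J)
    (hJ : ∀ j ∈ J, ∀ j' ∈ J, j ≠ j' → 2 ≤ |j - j'|) :
    (∑ᶠ P ∈ {l : List ℤ | l.Nodup ∧ l.toFinset = J \ K},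
      ∑ᶠ R ∈ {l : List ℤ | l.Nodup ∧ l.toFinset = K},
        ∑ A ∈ (Finset.Icc 1 ((J \ K).card + K.card)).powerset.filter
            (fun A => A.card = (J \ K).card),
          (Polynomial.X : Polynomial ℤ)
            ^ (comajZ P + comajZ R + invStat ((J \ K).card + K.card) A))
      = ∑ᶠ W ∈ {l : List ℤ | l.Nodup ∧ l.toFinset = J},
          (Polynomial.X : Polynomial ℤ) ^ comajZ W := by
  rw [setOf_eq_perms (J \ K), setOf_eq_perms K, setOf_eq_perms J]
  rw [finsum_mem_coe_finset, finsum_mem_coe_finset]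
  simp only [finsum_mem_coe_finset]
  set p := (J \ K).card with hp
  set r := K.card with hr
  have hcard : p + r = J.card := Finset.card_sdiff_add_card_eq_card hK
  calc ∑ P ∈ (J \ K).toList.permutations.toFinset,
        ∑ R ∈ K.toList.permutations.toFinset,
          ∑ A ∈ (Finset.Icc 1 (p + r)).powerset.filter (fun A => A.card = p),
            (Polynomial.X : Polynomial ℤ) ^ (comajZ P + comajZ R + invStat (p + r) A)
      = (∑ P ∈ (J \ K).toList.permutations.toFinset,
            (Polynomial.X : Polynomial ℤ) ^ comajZ P)
        * (∑ R ∈ K.toList.permutations.toFinset,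
            (Polynomial.X : Polynomial ℤ) ^ comajZ R)
        * (∑ A ∈ (Finset.Icc 1 (p + r)).powerset.filter (fun A => A.card = p),
            (Polynomial.X : Polynomial ℤ) ^ invStat (p + r) A) := by
        simp only [pow_add, Finset.sum_mul, Finset.mul_sum]
        rw [Finset.sum_congr rfl (fun P _ => Finset.sum_comm), Finset.sum_comm]
        exact Finset.sum_congr rfl (fun A _ => Finset.sum_comm)
    _ = qfact p * qfact r
        * (∑ A ∈ (Finset.Icc 1 (p + r)).powerset.filter (fun A => A.card = p),
            (Polynomial.X : Polynomial ℤ) ^ invStat (p + r) A) := by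
        rw [lemA p (J \ K) rfl, lemA r K rfl]
    _ = qfact (p + r) := lemG (p + r) p r rfl
    _ = ∑ W ∈ J.toList.permutations.toFinset,
          (Polynomial.X : Polynomial ℤ) ^ comajZ W := by
        rw [lemA J.card J rfl, hcard]
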